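/- Let A_1, …, A_ℓ ∈ ℝ^{m×n}, b_1, …, b_ℓ ∈ ℝ^n, c_1, …, c_ℓ ∈ ℝ, let ε > 0, ω > 0 and κ ≥ 0. Let y* ∈ ℝ^n with Euclidean norm ‖y*‖ ≤ κ, and let x* ∈ ℤ^m with x* ≥ 0 componentwise satisfy (x*)^⊤A_i y* + b_i^⊤ y* ≤ c_i − ε for all i = 1, …, ℓ. Suppose u ∈ ℤ^m \ {0} is such that width_u(P(y*)) < ω. Then |u^⊤ x*| ≤ ω·(1 + ε^{−1}·max_{1 ≤ i ≤ ℓ}(|c_i| + ‖b_i‖·κ)). -/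

import Mathlib

open scoped BigOperators

/-- The polyhedron `P(y) = { x ∈ ℝ^m : x ≥ 0, xᵀ Aᵢ y + bᵢᵀ y ≤ cᵢ (i = 1..ℓ) }`. -/
def Pset {l m n : ℕ} (A : Fin l → Matrix (Fin m) (Fin n) ℝ)
    (b : Fin l → EuclideanSpace ℝ (Fin n)) (c : Fin l → ℝ)
    (y : EuclideanSpace ℝ (Fin n)) : Set (EuclideanSpace ℝ (Fin m)) :=
  {x | (∀ j, 0 ≤ x j) ∧
    ∀ i, (∑ j, ∑ k, x j * A i j k * y k) + (∑ k, b i k * y k) ≤ c i}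

/-- The width of a set `K ⊆ ℝ^m` with respect to an integer direction `u`:
`width_u(K) = sup { uᵀ(x - y) : x, y ∈ K }`, valued in the extended reals. -/
noncomputable def intWidth {m : ℕ} (u : Fin m → ℤ) (K : Set (EuclideanSpace ℝ (Fin m))) :
    EReal :=
  ⨆ x ∈ K, ⨆ y ∈ K, ((∑ i, (u i : ℝ) * (x i - y i) : ℝ) : EReal)

/-- Branch-and-bound step: if `y*` has norm at most `κ`, `x* ∈ ℤ^m` is nonnegative and
satisfies all bilinear constraints with slack `ε`, and `u` is a nonzero integer
direction in which `P(y*)` has width less than `ω`, then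
`|uᵀ x*| ≤ ω (1 + ε⁻¹ maxᵢ (|cᵢ| + ‖bᵢ‖ κ))`. -/
theorem stmt6 {l m n : ℕ} (hl : 0 < l) (A : Fin l → Matrix (Fin m) (Fin n) ℝ)
    (b : Fin l → EuclideanSpace ℝ (Fin n)) (c : Fin l → ℝ)
    (ε : ℝ) (hε : 0 < ε) (ω : ℝ) (hω : 0 < ω) (κ : ℝ) (hκ : 0 ≤ κ)
    (ystar : EuclideanSpace ℝ (Fin n)) (hy : ‖ystar‖ ≤ κ)
    (xstar : Fin m → ℤ) (hx0 : ∀ j, 0 ≤ xstar j)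
    (hslack : ∀ i, (∑ j, ∑ k, (xstar j : ℝ) * A i j k * ystar k)
      + (∑ k, b i k * ystar k) ≤ c i - ε)
    (u : Fin m → ℤ) (hu : u ≠ 0)
    (hwidth : intWidth u (Pset A b c ystar) < (ω : EReal)) :
    |∑ j, (u j : ℝ) * (xstar j : ℝ)| ≤ ω * (1 + ε⁻¹ * ⨆ i, (|c i| + ‖b i‖ * κ)) := by

  have hne : Nonempty (Fin l) := ⟨⟨0, hl⟩⟩
  set M : ℝ := ⨆ i, (|c i| + ‖b i‖ * κ) with hMdef
  have hM0 : 0 ≤ M := Real.iSup_nonneg fun i => by positivity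
  have hMle : ∀ i, |c i| + ‖b i‖ * κ ≤ M := fun i =>
    le_ciSup (f := fun i => |c i| + ‖b i‖ * κ) (Set.Finite.bddAbove (Set.finite_range _)) i
  set M' : ℝ := max M ε with hM'def
  have hM'pos : 0 < M' := lt_max_of_lt_right hε
  set s : ℝ := 1 + ε / M' with hsdef
  have hs1 : 1 < s := by
    have : 0 < ε / M' := div_pos hε hM'pos
    simp [hsdef]; linarith
  set S : ℝ := ∑ j, (u j : ℝ) * (xstar j : ℝ) with hSdef
  set r : Fin l → ℝ := fun i => ∑ j, ∑ k, (xstar j : ℝ) * A i j k * ystar k with hrdef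
  set B : Fin l → ℝ := fun i => ∑ k, b i k * ystar k with hBdef
  have hB : ∀ i, |B i| ≤ ‖b i‖ * κ := by
    intro i
    have h1 : B i = inner ℝ (b i) ystar := by
      simp [hBdef, PiLp.inner_apply, RCLike.inner_apply, conj_trivial, mul_comm]
    rw [h1]
    calc |inner ℝ (b i) ystar| ≤ ‖b i‖ * ‖ystar‖ := abs_real_inner_le_norm _ _
      _ ≤ ‖b i‖ * κ := by
        exact mul_le_mul_of_nonneg_left hy (norm_nonneg _)
  have hxP : WithLp.toLp 2 (fun j => (xstar j : ℝ)) ∈ Pset A b c ystar := by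
    refine ⟨fun j => by show (0:ℝ) ≤ ((xstar j : ℝ)); exact_mod_cast hx0 j, fun i => ?_⟩
    have := hslack i
    simp only [Pset]
    linarith
  have hxsP : WithLp.toLp 2 (fun j => s * (xstar j : ℝ)) ∈ Pset A b c ystar := by
    constructor
    · intro j
      have h1 : (0:ℝ) ≤ (xstar j : ℝ) := by exact_mod_cast hx0 j
      have h2 : (0:ℝ) ≤ s := by linarith
      exact mul_nonneg h2 h1
    · intro i
      have hri : r i + B i ≤ c i - ε := hslack i
      have hsum : (∑ j, ∑ k, (s * (xstar j:ℝ)) * A i j k * ystar k) = s * r i := by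
        rw [hrdef]
        simp only [Finset.mul_sum]
        exact Finset.sum_congr rfl fun j _ => Finset.sum_congr rfl fun k _ => by ring
      show (∑ j, ∑ k, (s * (xstar j:ℝ)) * A i j k * ystar k) + B i ≤ c i
      rw [hsum]
      have key : (s - 1) * r i ≤ ε := by
        rcases le_or_gt (r i) 0 with h | h
        · nlinarith
        · have hr : r i ≤ M' := by
            have h1 := hB i
            have h2 := hMle i
            have h3 : M ≤ M' := le_max_left _ _
            have h4 : |B i| ≥ -(B i) := neg_le_abs _
            have h5 : c i ≤ |c i| := le_abs_self _
            linarith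
          have hseq : s - 1 = ε / M' := by rw [hsdef]; ring
          rw [hseq]
          calc ε / M' * r i ≤ ε / M' * M' :=
                mul_le_mul_of_nonneg_left hr (le_of_lt (div_pos hε hM'pos))
            _ = ε := div_mul_cancel₀ ε (ne_of_gt hM'pos)
      nlinarith
  have hw : ∀ x ∈ Pset A b c ystar, ∀ z ∈ Pset A b c ystar,
      (∑ i, (u i : ℝ) * (x i - z i)) < ω := by
    intro x hx z hz
    have hle : ((∑ i, (u i : ℝ) * (x i - z i) : ℝ) : EReal) ≤ intWidth u (Pset A b c ystar) := by
      refine le_trans ?_ (le_iSup₂ (f := fun x (_ : x ∈ Pset A b c ystar) =>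
        ⨆ y ∈ Pset A b c ystar, ((∑ i, (u i : ℝ) * (x i - y i) : ℝ) : EReal)) x hx)
      exact le_iSup₂ (f := fun y (_ : y ∈ Pset A b c ystar) =>
        ((∑ i, (u i : ℝ) * (x i - y i) : ℝ) : EReal)) z hz
    have := hle.trans_lt hwidth
    exact_mod_cast this
  have h1 : (∑ j, (u j:ℝ) * ((s * (xstar j:ℝ)) - (xstar j:ℝ))) < ω := hw _ hxsP _ hxP
  have h2 : (∑ j, (u j:ℝ) * ((xstar j:ℝ) - (s * (xstar j:ℝ)))) < ω := hw _ hxP _ hxsP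
  have hsum1 : (∑ j, (u j:ℝ) * ((s * (xstar j:ℝ)) - (xstar j:ℝ))) = (s-1) * S := by
    rw [hSdef, Finset.mul_sum]
    exact Finset.sum_congr rfl fun j _ => by ring
  have hsum2 : (∑ j, (u j:ℝ) * ((xstar j:ℝ) - (s * (xstar j:ℝ)))) = -((s-1) * S) := by
    rw [hSdef, Finset.mul_sum, ← Finset.sum_neg_distrib]
    exact Finset.sum_congr rfl fun j _ => by ring
  rw [hsum1] at h1
  rw [hsum2] at h2
  have habs : (s - 1) * |S| ≤ ω := by
    rcases abs_cases S with ⟨hc, _⟩ | ⟨hc, _⟩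
    · rw [hc]; linarith
    · rw [hc]; nlinarith
  have hseq : s - 1 = ε / M' := by rw [hsdef]; ring
  rw [hseq] at habs
  have hSle : |S| ≤ ω * M' / ε := by
    rw [le_div_iff₀ hε]
    rw [div_mul_eq_mul_div, div_le_iff₀ hM'pos] at habs
    nlinarith
  calc |S| ≤ ω * M' / ε := hSle
    _ ≤ ω * (1 + ε⁻¹ * M) := by
      have hM'le : M' ≤ ε + M := by
        rw [hM'def]; exact max_le (by linarith) (by linarith)
      rw [div_le_iff₀ hε]
      have : ω * M' ≤ ω * (ε + M) := mul_le_mul_of_nonneg_left hM'le (le_of_lt hω)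
      calc ω * M' ≤ ω * (ε + M) := this
        _ = ω * (1 + ε⁻¹ * M) * ε := by field_simp
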